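/- For every t ∈ [0,1], the set of ≼-lower bounds of t is linearly ordered by ≼: if r ≼ t and r' ≼ t, then r ≼ r' or r' ≼ r. -/

import Mathlib

open Set Filter

/-- The infimum `I_s^t` of `f` over the interval `[s, t]`. -/
noncomputable def infIcc (f : ℝ → ℝ) (s t : ℝ) : ℝ := sInf (f '' Set.Icc s t)

/-- The genealogical relation `s ≼ t` associated with the excursion-type function `f`,
where `fl` is the left-limit function of `f` (with the convention `fl 0 = 0`):
`s ≼ t ↔ s ≤ t ∧ f(s-) ≤ I_s^t`. -/
def Prec (f fl : ℝ → ℝ) (s t : ℝ) : Prop := s ≤ t ∧ fl s ≤ infIcc f s t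

/-- The jump `Δ_t = f(t) - f(t-)` of `f` at `t` (with the convention `fl 0 = 0`
this gives `Δ_0 = 0` for `f 0 = 0`). -/
def jump (f fl : ℝ → ℝ) (t : ℝ) : ℝ := f t - fl t

/-- The position `x_s^t = I_s^t - f(s-)` of the ancestral line of `t` in the loop at `s`. -/
noncomputable def xpos (f fl : ℝ → ℝ) (s t : ℝ) : ℝ := infIcc f s t - fl s

/-- Distance on the cycle of length `D`: `δ_D(a,b) = min (|a-b|, D - |a-b|)`. -/
def cycleDist (D a b : ℝ) : ℝ := min |a - b| (D - |a - b|)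

/-- `d₀(s,t) = ∑_{s ≺ r ≼ t} δ_{Δ_r}(0, x_r^t)`. -/
noncomputable def dZero (f fl : ℝ → ℝ) (s t : ℝ) : ℝ :=
  ∑' r : {r : ℝ // Prec f fl s r ∧ s ≠ r ∧ Prec f fl r t},
    cycleDist (jump f fl r.1) 0 (xpos f fl r.1 t)

/-- The most recent common ancestor `s ∧ t` of `s` and `t`: the greatest common
`≼`-lower bound of `s` and `t` in `[0,1]`, realized as the supremum of the set of
common lower bounds. -/
noncomputable def mca (f fl : ℝ → ℝ) (s t : ℝ) : ℝ :=
  sSup {r : ℝ | r ∈ Set.Icc (0:ℝ) 1 ∧ Prec f fl r s ∧ Prec f fl r t}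

/-- The looptree pseudo-distance
`d(s,t) = δ_{Δ_{s∧t}}(x_{s∧t}^s, x_{s∧t}^t) + d₀(s∧t, s) + d₀(s∧t, t)`. -/
noncomputable def looptreeDist (f fl : ℝ → ℝ) (s t : ℝ) : ℝ :=
  cycleDist (jump f fl (mca f fl s t)) (xpos f fl (mca f fl s t) s) (xpos f fl (mca f fl s t) t)
    + dZero f fl (mca f fl s t) s + dZero f fl (mca f fl s t) t

/-- for every t ∈ [0,1], the set of ≼-lower bounds of t is linearly
ordered by ≼. -/
theorem prec_lowerBounds_linear (f fl : ℝ → ℝ)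
    (hf_right : ∀ t ∈ Set.Ico (0:ℝ) 1, Filter.Tendsto f (nhdsWithin t (Set.Ici t)) (nhds (f t)))
    (hf_left : ∀ t ∈ Set.Ioc (0:ℝ) 1, Filter.Tendsto f (nhdsWithin t (Set.Iio t)) (nhds (fl t)))
    (hfl0 : fl 0 = 0)
    (hf_nonneg : ∀ t ∈ Set.Icc (0:ℝ) 1, 0 ≤ f t)
    (hf_jump : ∀ t ∈ Set.Icc (0:ℝ) 1, fl t ≤ f t)
    (hf0 : f 0 = 0) (hf1 : f 1 = 0) :
    ∀ t ∈ Set.Icc (0:ℝ) 1, ∀ r ∈ Set.Icc (0:ℝ) 1, ∀ r' ∈ Set.Icc (0:ℝ) 1,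
      Prec f fl r t → Prec f fl r' t → Prec f fl r r' ∨ Prec f fl r' r := by
  intro t ht r hr r' hr' hrt hrt'
  have key : ∀ a ∈ Set.Icc (0:ℝ) 1, ∀ b, a ≤ b → b ≤ t → Prec f fl a t → Prec f fl a b := by
    intro a ha b hab hbt hat
    refine ⟨hab, hat.2.trans ?_⟩
    apply csInf_le_csInf
    · refine ⟨0, ?_⟩
      rintro x ⟨y, hy, rfl⟩
      exact hf_nonneg y ⟨ha.1.trans hy.1, hy.2.trans ht.2⟩
    · exact ⟨f a, ⟨a, ⟨le_refl a, hab⟩, rfl⟩⟩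
    · exact Set.image_mono (f := f) (Set.Icc_subset_Icc le_rfl hbt)
  rcases le_total r r' with h | h
  · exact Or.inl (key r hr r' h hrt'.1 hrt)
  · exact Or.inr (key r' hr' r h hrt.1 hrt')
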